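/- Let R = k[[x,y]]/(x^2, xy) where k is a field. Then every indecomposable non-free torsionless (i.e., first-syzygy) R-module is isomorphic to R/(x) or R/(x,y). In particular, the category of first syzygies Ω mod(R) has finite representation type. -/

import Mathlib

universe u

open IsLocalRing

section Prelim

variable (R : Type u) [CommRing R]

/-- `N` is a direct summand of `M`. -/
def IsDirectSummand (N M : ModuleCat.{u} R) : Prop :=
  ∃ (i : N →ₗ[R] M) (p : M →ₗ[R] N), p ∘ₗ i = LinearMap.id

/-- `N` belongs to `add M`: direct summands of finite direct sums of copies of `M`. -/
def MemAdd (M N : ModuleCat.{u} R) : Prop :=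
  ∃ n : ℕ, IsDirectSummand R N (ModuleCat.of R (Fin n → M))

/-- `N` belongs to the additive closure of a class `X` of modules. -/
def MemAddClos (X : ModuleCat.{u} R → Prop) (N : ModuleCat.{u} R) : Prop :=
  ∃ (n : ℕ) (f : Fin n → ModuleCat.{u} R), (∀ i, X (f i)) ∧
    IsDirectSummand R N (ModuleCat.of R (∀ i, f i))

/-- An indecomposable module: nontrivial, with no nontrivial idempotent endomorphism. -/
def Indec (M : ModuleCat.{u} R) : Prop :=
  Nontrivial M ∧ ∀ e : M →ₗ[R] M, e ∘ₗ e = e → e = 0 ∨ e = LinearMap.id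

/-- A class of modules has finite representation type: finitely many indecomposables
up to isomorphism. -/
def FiniteRepType (X : ModuleCat.{u} R → Prop) : Prop :=
  ∃ (n : ℕ) (f : Fin n → ModuleCat.{u} R),
    ∀ N, X N → Indec R N → ∃ i, Nonempty (N ≃ₗ[R] f i)

/-- A class of modules has countable representation type. -/
def CountableRepType (X : ModuleCat.{u} R → Prop) : Prop :=
  ∃ f : ℕ → ModuleCat.{u} R, ∀ N, X N → Indec R N → ∃ i, Nonempty (N ≃ₗ[R] f i)

/-- `N` is a first syzygy of `M`. -/
def SyzygyOf (N M : ModuleCat.{u} R) : Prop :=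
  ∃ P : ModuleCat.{u} R, Module.Finite R P ∧ Module.Projective R P ∧
    ∃ (ι : N →ₗ[R] P) (π : P →ₗ[R] M),
      Function.Injective ι ∧ Function.Surjective π ∧ LinearMap.range ι = LinearMap.ker π

/-- `N` is an `n`-th syzygy of `M`. -/
def IsNthSyzygyOf : ℕ → ModuleCat.{u} R → ModuleCat.{u} R → Prop
  | 0, N, M => Nonempty (N ≃ₗ[R] M)
  | n + 1, N, M => ∃ K : ModuleCat.{u} R, SyzygyOf R K M ∧ IsNthSyzygyOf n N K

/-- `M` is locally free on the punctured spectrum of a local ring. -/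
def LocFreePunctured [IsLocalRing R] (M : ModuleCat.{u} R) : Prop :=
  ∀ p : PrimeSpectrum R, p.asIdeal ≠ maximalIdeal R →
    Module.Free (Localization.AtPrime p.asIdeal) (LocalizedModule p.asIdeal.primeCompl M)

/-- `ExtVanish R N Y i` says that `Ext^i_R(N, Y) = 0`, expressed via (any, equivalently some)
projective resolution of `N`. -/
def ExtVanish (N Y : ModuleCat.{u} R) : ℕ → Prop
  | 0 => Subsingleton (N →ₗ[R] Y)
  | j + 1 =>
    ∃ (F : ℕ → ModuleCat.{u} R) (d : ∀ i : ℕ, F (i + 1) →ₗ[R] F i) (ε : F 0 →ₗ[R] N),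
      (∀ i, Module.Projective R (F i)) ∧ Function.Surjective ε ∧
      LinearMap.range (d 0) = LinearMap.ker ε ∧
      (∀ i, LinearMap.range (d (i + 1)) = LinearMap.ker (d i)) ∧
      ∀ g : F (j + 1) →ₗ[R] Y, g ∘ₗ d (j + 1) = 0 → ∃ f : F j →ₗ[R] Y, g = f ∘ₗ d j

/-- `depth M ≥ n`, via vanishing of `Ext^i(k, M)` for `i < n`. -/
def DepthGE [IsLocalRing R] (n : ℕ) (M : ModuleCat.{u} R) : Prop :=
  ∀ i < n, ExtVanish R (ModuleCat.of R (ResidueField R)) M i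

/-- projective dimension at most `n`. -/
def PdLE : ℕ → ModuleCat.{u} R → Prop
  | 0, M => Module.Projective R M
  | n + 1, M => ∃ N, SyzygyOf R N M ∧ PdLE n N

/-- A commutative Noetherian ring is regular iff every finitely generated module has
finite projective dimension. -/
def IsRegularFPD : Prop :=
  ∀ M : ModuleCat.{u} R, Module.Finite R M → ∃ n, PdLE R n M

/-- the ring has an isolated singularity: localization at every nonmaximal prime is regular. -/
def HasIsolatedSingularity : Prop :=
  ∀ p : PrimeSpectrum R, ¬ p.asIdeal.IsMaximal →
    IsRegularFPD (Localization.AtPrime p.asIdeal)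

/-- Gorenstein projective modules (possibly infinitely generated). -/
def IsGorensteinProjective (M : ModuleCat.{u} R) : Prop :=
  ∃ (P : ℤ → ModuleCat.{u} R) (d : ∀ i : ℤ, P (i + 1) →ₗ[R] P i),
    (∀ i, Module.Projective R (P i)) ∧
    (∀ i, LinearMap.range (d (i + 1)) = LinearMap.ker (d i)) ∧
    (∀ Q : ModuleCat.{u} R, Module.Projective R Q →
      ∀ (i : ℤ) (g : P (i + 1) →ₗ[R] Q), g ∘ₗ d (i + 1) = 0 →
        ∃ f : P i →ₗ[R] Q, g = f ∘ₗ d i) ∧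
    Nonempty (M ≃ₗ[R] LinearMap.range (d 0))

/-- `M` is `n`-torsionfree: `Ext^i(Tr M, R) = 0` for `1 ≤ i ≤ n`, where `Tr M` is the
Auslander transpose computed from a minimal free presentation. -/
def IsNTorsionFree [IsLocalRing R] (n : ℕ) (M : ModuleCat.{u} R) : Prop :=
  ∃ (F₀ F₁ : ModuleCat.{u} R) (π : F₀ →ₗ[R] M) (d : F₁ →ₗ[R] F₀),
    Module.Finite R F₀ ∧ Module.Free R F₀ ∧ Module.Finite R F₁ ∧ Module.Free R F₁ ∧
    Function.Surjective π ∧ LinearMap.ker π = LinearMap.range d ∧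
    LinearMap.ker π ≤ (maximalIdeal R) • (⊤ : Submodule R F₀) ∧
    LinearMap.ker d ≤ (maximalIdeal R) • (⊤ : Submodule R F₁) ∧
    ∀ i, 1 ≤ i → i ≤ n →
      ExtVanish R (ModuleCat.of R ((Module.Dual R F₁) ⧸ LinearMap.range d.dualMap))
        (ModuleCat.of R R) i

/-- extension: `Z` is an extension of a module in `Y` by a module in `X`. -/
def MemExtOp (X Y : ModuleCat.{u} R → Prop) (Z : ModuleCat.{u} R) : Prop :=
  ∃ (A B : ModuleCat.{u} R) (i : A →ₗ[R] Z) (p : Z →ₗ[R] B),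
    X A ∧ Y B ∧ Function.Injective i ∧ Function.Surjective p ∧
      LinearMap.range i = LinearMap.ker p

/-- the ball `[G]_1`. -/
def MemBallOne (G : ModuleCat.{u} R) : ModuleCat.{u} R → Prop :=
  MemAddClos R (fun N => Nonempty (N ≃ₗ[R] ModuleCat.of R R) ∨ ∃ i, IsNthSyzygyOf R i N G)

/-- the ball `[G]_{r+1}` (indexing shifted by one: `MemBall R G r = [G]_{r+1}`). -/
def MemBall (G : ModuleCat.{u} R) : ℕ → ModuleCat.{u} R → Prop
  | 0 => MemBallOne R G
  | r + 1 => MemAddClos R (MemExtOp R (MemBall G r) (MemBallOne R G))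

/-- `|Y|_{s+1}` (indexing shifted by one: `MemPipe R Y s = |Y|_{s+1}`). -/
def MemPipe (Y : ModuleCat.{u} R → Prop) : ℕ → ModuleCat.{u} R → Prop
  | 0 => MemAddClos R Y
  | s + 1 => MemAddClos R (MemExtOp R (MemPipe Y s) Y)

end Prelim

set_option maxHeartbeats 1000000
set_option synthInstance.maxHeartbeats 400000

namespace Stmt17

open MvPowerSeries Finsupp Finset


variable (k : Type) [Field k]

/-- evaluation at `X 0 = 0`, as a ring hom to one-variable power series. -/
noncomputable def phi : MvPowerSeries (Fin 2) k →+* PowerSeries k where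
  toFun f := PowerSeries.mk fun n => MvPowerSeries.coeff (single 1 n) f
  map_one' := by
    ext n
    simp [PowerSeries.coeff_mk, MvPowerSeries.coeff_one, single_eq_zero, PowerSeries.coeff_one]
  map_mul' f g := by
    ext n
    simp only [PowerSeries.coeff_mk, PowerSeries.coeff_mul, MvPowerSeries.coeff_mul,
      antidiagonal_single, Finset.sum_map, Function.Embedding.coe_prodMap,
      Function.Embedding.coeFn_mk, Prod.map_apply]
    exact Finset.sum_congr rfl fun x _ => by cases x; rfl
  map_zero' := by ext n; simp [PowerSeries.coeff_mk]
  map_add' f g := by ext n; simp [PowerSeries.coeff_mk]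

@[simp] lemma coeff_phi (f : MvPowerSeries (Fin 2) k) (n : ℕ) :
    PowerSeries.coeff n (phi k f) = MvPowerSeries.coeff (single 1 n) f := by
  simp [phi, PowerSeries.coeff_mk]

/-- the inclusion of one-variable power series, `X ↦ X 1`. -/
noncomputable def psi : PowerSeries k →+* MvPowerSeries (Fin 2) k where
  toFun p d := if d 0 = 0 then PowerSeries.coeff (d 1) p else 0
  map_one' := by
    ext d
    rw [MvPowerSeries.coeff_one]
    show (if d 0 = 0 then _ else _) = _
    by_cases h0 : d 0 = 0
    · rw [if_pos h0, PowerSeries.coeff_one]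
      by_cases h1 : d 1 = 0
      · have : d = 0 := by
          ext i; fin_cases i <;> simpa
        simp [this, h1]
      · have : d ≠ 0 := fun h => h1 (by simp [h])
        simp [h1, this]
    · have : d ≠ 0 := fun h => h0 (by simp [h])
      simp [h0, this]
  map_mul' p q := by
    ext d
    refine Eq.trans ?_ (MvPowerSeries.coeff_mul _ _ _).symm
    show (if d 0 = 0 then PowerSeries.coeff (d 1) (p * q) else 0) = _
    by_cases h0 : d 0 = 0
    · have hd : d = single 1 (d 1) := by
        ext i; fin_cases i <;> simp [h0]
      rw [if_pos h0, PowerSeries.coeff_mul]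
      conv_rhs => rw [hd]
      rw [antidiagonal_single, Finset.sum_map]
      apply Finset.sum_congr rfl
      rintro ⟨i, j⟩ _
      show _ = MvPowerSeries.coeff _ _ * MvPowerSeries.coeff _ _
      simp only [MvPowerSeries.coeff_apply]
      show _ = (if (single 1 i) 0 = 0 then _ else _) * (if (single 1 j) 0 = 0 then _ else _)
      simp
    · rw [if_neg h0]
      symm
      apply Finset.sum_eq_zero
      rintro ⟨u, v⟩ huv
      rw [Finset.HasAntidiagonal.mem_antidiagonal] at huv
      have : u 0 ≠ 0 ∨ v 0 ≠ 0 := by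
        by_contra h
        push_neg at h
        exact h0 (by rw [← huv]; simp [h.1, h.2])
      simp only [MvPowerSeries.coeff_apply]
      rcases this with h | h
      · show (if u 0 = 0 then _ else _) * _ = _
        rw [if_neg h, zero_mul]
      · show _ * (if v 0 = 0 then _ else _) = _
        rw [if_neg h, mul_zero]
  map_zero' := by ext d; show (if _ then _ else _) = _; simp
  map_add' p q := by
    ext d
    change (if d 0 = 0 then PowerSeries.coeff (d 1) (p + q) else 0) =
      (if d 0 = 0 then PowerSeries.coeff (d 1) p else 0) +
      (if d 0 = 0 then PowerSeries.coeff (d 1) q else 0)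
    split_ifs <;> simp


@[simp] lemma coeff_psi (p : PowerSeries k) (d : Fin 2 →₀ ℕ) :
    MvPowerSeries.coeff d (psi k p) =
      if d 0 = 0 then PowerSeries.coeff (d 1) p else 0 := rfl

lemma phi_psi (p : PowerSeries k) : phi k (psi k p) = p := by
  ext n
  rw [coeff_phi, coeff_psi]
  simp

lemma phi_surjective : Function.Surjective (phi k) := fun p => ⟨psi k p, phi_psi k p⟩

/-- coefficient of `X s * g`. -/
lemma coeff_Xs_mul (s : Fin 2) (g : MvPowerSeries (Fin 2) k) (d : Fin 2 →₀ ℕ) :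
    MvPowerSeries.coeff d (X s * g) =
      if single s 1 ≤ d then MvPowerSeries.coeff (d - single s 1) g else 0 := by
  rw [X_def, coeff_monomial_mul]
  split_ifs <;> simp

/-- the shift along `X 0`. -/
noncomputable def shift0 (f : MvPowerSeries (Fin 2) k) : MvPowerSeries (Fin 2) k :=
  fun d => f (d + single 0 1)

lemma eq_psi_phi_add (f : MvPowerSeries (Fin 2) k) :
    f = psi k (phi k f) + X 0 * shift0 k f := by
  ext d
  rw [map_add, coeff_psi, coeff_Xs_mul]
  by_cases h0 : d 0 = 0
  · have hd : d = single 1 (d 1) := by ext i; fin_cases i <;> simp [h0]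
    rw [if_pos h0, if_neg (by rw [single_le_iff, h0]; omega), add_zero, coeff_phi]
    conv_lhs => rw [hd]
  · rw [if_neg h0, if_pos (by rw [single_le_iff]; omega), zero_add]
    show f d = shift0 k f (d - single 0 1)
    show f d = f (d - single 0 1 + single 0 1)
    rw [tsub_add_cancel_of_le (by rw [single_le_iff]; omega)]

lemma ker_phi : RingHom.ker (phi k) = Ideal.span {(X 0 : MvPowerSeries (Fin 2) k)} := by
  apply le_antisymm
  · intro f hf
    rw [RingHom.mem_ker] at hf
    rw [Ideal.mem_span_singleton']
    refine ⟨shift0 k f, ?_⟩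
    conv_rhs => rw [eq_psi_phi_add k f]
    rw [hf, map_zero, zero_add, mul_comm]
  · rw [Ideal.span_le, Set.singleton_subset_iff]
    rw [SetLike.mem_coe, RingHom.mem_ker]
    ext n
    rw [coeff_phi]
    rw [MvPowerSeries.coeff_X]
    rw [if_neg (fun h => by simpa using DFunLike.congr_fun h 0)]
    simp

lemma mem_span_X01 (f : MvPowerSeries (Fin 2) k)
    (hc : MvPowerSeries.coeff 0 f = 0) :
    f ∈ Ideal.span {(X 0 : MvPowerSeries (Fin 2) k), X 1} := by
  set g := shift0 k f with hg
  set h : MvPowerSeries (Fin 2) k :=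
    fun d => if d 0 = 0 then f (d + single 1 1) else 0 with hh
  have coeff_g : ∀ m : Fin 2 →₀ ℕ, MvPowerSeries.coeff m g = f (m + single 0 1) :=
    fun m => rfl
  have coeff_h : ∀ m : Fin 2 →₀ ℕ,
      MvPowerSeries.coeff m h = if m 0 = 0 then f (m + single 1 1) else 0 :=
    fun m => rfl
  have key : f = X 0 * g + X 1 * h := by
    ext d
    rw [map_add, coeff_Xs_mul, coeff_Xs_mul]
    by_cases h0 : d 0 = 0
    · rw [if_neg (by rw [single_le_iff, h0]; omega), zero_add]
      by_cases h1 : d 1 = 0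
      · have hd : d = 0 := by ext i; fin_cases i <;> simpa
        rw [if_neg (by rw [single_le_iff, h1]; omega), hd]
        exact hc
      · rw [if_pos (by rw [single_le_iff]; omega), coeff_h,
          if_pos (by rw [tsub_apply]; simp [h0]),
          tsub_add_cancel_of_le (by rw [single_le_iff]; omega)]
        rfl
    · rw [if_pos (by rw [single_le_iff]; omega)]
      have hX1 : (if single 1 1 ≤ d then MvPowerSeries.coeff (d - single 1 1) h else 0) = 0 := by
        split_ifs with hle
        · rw [coeff_h, if_neg (by rw [tsub_apply]; simpa)]
        · rfl
      rw [hX1, add_zero, coeff_g,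
        tsub_add_cancel_of_le (by rw [single_le_iff]; omega)]
      rfl
  rw [key]
  exact Ideal.add_mem _ (Ideal.mul_mem_right _ _ (Ideal.subset_span (by simp)))
    (Ideal.mul_mem_right _ _ (Ideal.subset_span (by simp)))


/-! The specific ring. -/

noncomputable abbrev Ik : Ideal (MvPowerSeries (Fin 2) k) :=
  Ideal.span {(X 0 : MvPowerSeries (Fin 2) k) ^ 2, X 0 * X 1}

lemma X0_ne_zero : (X 0 : MvPowerSeries (Fin 2) k) ≠ 0 := by
  intro h
  have := congrArg (MvPowerSeries.coeff (single 0 1)) h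
  rw [coeff_index_single_self_X, map_zero] at this
  exact one_ne_zero this

lemma Ik_le_spanX0 : Ik k ≤ Ideal.span {(X 0 : MvPowerSeries (Fin 2) k)} := by
  rw [Ik, Ideal.span_le]
  rintro f (rfl | rfl)
  · rw [SetLike.mem_coe, pow_two]
    exact Ideal.mul_mem_right _ _ (Ideal.subset_span rfl)
  · exact Ideal.mul_mem_right _ _ (Ideal.subset_span rfl)

lemma spanX0_ne_top : Ideal.span {(X 0 : MvPowerSeries (Fin 2) k)} ≠ ⊤ := by
  intro h
  have h1 : (1 : MvPowerSeries (Fin 2) k) ∈ Ideal.span {(X 0 : MvPowerSeries (Fin 2) k)} := by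
    rw [h]; trivial
  obtain ⟨a, ha⟩ := Ideal.mem_span_singleton'.mp h1
  have := congrArg (constantCoeff (σ := Fin 2) (R := k)) ha
  rw [map_mul, constantCoeff_X, mul_zero, map_one] at this
  exact one_ne_zero this.symm

lemma Ik_ne_top : Ik k ≠ ⊤ :=
  fun h => spanX0_ne_top k (top_le_iff.mp (h ▸ Ik_le_spanX0 k))

lemma X0_not_mem_Ik : (X 0 : MvPowerSeries (Fin 2) k) ∉ Ik k := by
  intro h
  obtain ⟨a, b, hab⟩ := Ideal.mem_span_pair.mp (by rwa [Ik] at h)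
  have h2 : X 0 * (a * X 0 + b * X 1) = X 0 * 1 := by
    rw [mul_one]
    conv_rhs => rw [← hab]
    ring
  have h3 : a * X 0 + b * X 1 = 1 := mul_left_cancel₀ (X0_ne_zero k) h2
  have := congrArg (constantCoeff (σ := Fin 2) (R := k)) h3
  rw [map_add, map_mul, map_mul, constantCoeff_X, constantCoeff_X, mul_zero, mul_zero,
    add_zero, map_one] at this
  exact one_ne_zero this.symm

abbrev Rk := MvPowerSeries (Fin 2) k ⧸ Ik k

noncomputable def xk : Rk k := Ideal.Quotient.mk _ (X 0)
noncomputable def yk : Rk k := Ideal.Quotient.mk _ (X 1)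

instance : Nontrivial (Rk k) :=
  Ideal.Quotient.nontrivial_iff.mpr (Ik_ne_top k)

instance : IsLocalRing (Rk k) :=
  IsLocalRing.of_surjective' (Ideal.Quotient.mk (Ik k)) Ideal.Quotient.mk_surjective

lemma x_mul_x : xk k * xk k = 0 := by
  rw [xk, ← map_mul, Ideal.Quotient.eq_zero_iff_mem, ← pow_two]
  exact Ideal.subset_span (by simp)

lemma x_mul_y : xk k * yk k = 0 := by
  rw [xk, yk, ← map_mul, Ideal.Quotient.eq_zero_iff_mem]
  exact Ideal.subset_span (by simp)

lemma x_ne_zero : xk k ≠ 0 := by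
  rw [xk, Ne, Ideal.Quotient.eq_zero_iff_mem]
  exact X0_not_mem_Ik k

lemma nonunit_mem (r : Rk k) (hr : ¬ IsUnit r) : r ∈ Ideal.span {xk k, yk k} := by
  obtain ⟨f, rfl⟩ := Ideal.Quotient.mk_surjective r
  have hf : ¬ IsUnit f := fun h => hr (h.map _)
  have hc : MvPowerSeries.coeff 0 f = 0 := by
    rw [coeff_zero_eq_constantCoeff_apply]
    by_contra hne
    exact hf (isUnit_iff_constantCoeff.mpr (Ne.isUnit hne))
  obtain ⟨a, b, hab⟩ := Ideal.mem_span_pair.mp (mem_span_X01 k f hc)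
  exact Ideal.mem_span_pair.mpr ⟨Ideal.Quotient.mk _ a, Ideal.Quotient.mk _ b, by
    rw [xk, yk, ← map_mul, ← map_mul, ← map_add, hab]⟩

lemma span_xy_eq_maximalIdeal :
    Ideal.span {xk k, yk k} = IsLocalRing.maximalIdeal (Rk k) := by
  apply le_antisymm
  · rw [Ideal.span_le]
    rintro r (rfl | rfl) <;> rw [SetLike.mem_coe, IsLocalRing.mem_maximalIdeal] <;>
      intro hu <;> obtain ⟨u, hu⟩ := hu
    · apply x_ne_zero k
      have h1 : xk k * (xk k * (↑u⁻¹ : Rk k)) = 0 := by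
        rw [← mul_assoc, x_mul_x, zero_mul]
      rwa [show xk k * (↑u⁻¹ : Rk k) = 1 by rw [← hu]; exact Units.mul_inv u, mul_one] at h1
    · apply x_ne_zero k
      have h1 : xk k * (yk k * (↑u⁻¹ : Rk k)) = 0 := by
        rw [← mul_assoc, x_mul_y, zero_mul]
      rwa [show yk k * (↑u⁻¹ : Rk k) = 1 by rw [← hu]; exact Units.mul_inv u, mul_one] at h1
  · intro r hr
    exact nonunit_mem k r (IsLocalRing.mem_maximalIdeal r |>.mp hr)

lemma x_mul_of_mem (r : Rk k) (hr : r ∈ Ideal.span {xk k, yk k}) : xk k * r = 0 := by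
  obtain ⟨a, b, rfl⟩ := Ideal.mem_span_pair.mp hr
  have : xk k * (a * xk k + b * yk k) =
      a * (xk k * xk k) + b * (xk k * yk k) := by ring
  rw [this, x_mul_x, x_mul_y, mul_zero, mul_zero, add_zero]

/-- `R/(x) ≅ k[[X]]`. -/
noncomputable def sIso : (Rk k ⧸ Ideal.span {xk k}) ≃+* PowerSeries k := by
  have h1 : Ideal.span {xk k} =
      Ideal.map (Ideal.Quotient.mk (Ik k)) (Ideal.span {(X 0 : MvPowerSeries (Fin 2) k)}) := by
    rw [Ideal.map_span, Set.image_singleton]; rfl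
  exact (Ideal.quotEquivOfEq h1).trans <|
    (DoubleQuot.quotQuotEquivQuotSup (Ik k) (Ideal.span {X 0})).trans <|
    (Ideal.quotEquivOfEq (sup_eq_right.mpr (Ik_le_spanX0 k))).trans <|
    (Ideal.quotEquivOfEq (ker_phi k).symm).trans <|
    RingHom.quotientKerEquivOfSurjective (phi_surjective k)

lemma sDomain : IsDomain (Rk k ⧸ Ideal.span {xk k}) :=
  MulEquiv.isDomain _ (sIso k).toMulEquiv

lemma sPIR : IsPrincipalIdealRing (Rk k ⧸ Ideal.span {xk k}) :=
  IsPrincipalIdealRing.of_surjective (sIso k).symm.toRingHom (sIso k).symm.surjective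

/-- If `σ * r = 0` with `σ ∉ (x)`, then `y * r = 0`. -/
lemma y_mul_eq_zero (r σ : Rk k) (h : σ * r = 0) (hσ : σ ∉ Ideal.span {xk k}) :
    yk k * r = 0 := by
  set q := Ideal.Quotient.mk (Ideal.span {xk k})
  have h1 : sIso k (q σ) * sIso k (q r) = 0 := by
    rw [← map_mul, ← map_mul, h, map_zero, map_zero]
  have h2 : sIso k (q σ) ≠ 0 := by
    intro h0
    apply hσ
    rw [← Ideal.Quotient.eq_zero_iff_mem]
    exact (sIso k).injective (by rw [h0, map_zero])
  have h3 : q r = 0 := by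
    have := (mul_eq_zero.mp h1).resolve_left h2
    exact (sIso k).injective (by rw [this, map_zero])
  obtain ⟨c, hc⟩ := Ideal.mem_span_singleton'.mp (Ideal.Quotient.eq_zero_iff_mem.mp h3)
  rw [← hc, show yk k * (c * xk k) = c * (xk k * yk k) by ring, x_mul_y, mul_zero]

/-- every element of `A` is congruent mod `Ik` to `psi p + psi q * X 0`. -/
lemma exists_psi_decomp (f : MvPowerSeries (Fin 2) k) :
    ∃ p q : PowerSeries k, f - (psi k p + psi k q * X 0) ∈ Ik k := by
  have h1 := eq_psi_phi_add k f
  have h2 := eq_psi_phi_add k (shift0 k f)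
  refine ⟨phi k f, phi k (shift0 k f), ?_⟩
  set s1 := shift0 k f with hs1
  set s2 := shift0 k s1 with hs2
  set p := phi k f with hp
  set q := phi k s1 with hq
  have key : f - (psi k p + psi k q * X 0) = X 0 ^ 2 * s2 := by
    rw [h1, h2]; ring
  rw [key]
  exact Ideal.mul_mem_right _ _ (Ideal.subset_span (by simp))



/-- A finite free nontrivial module with no nontrivial idempotent endomorphism is
isomorphic to the base ring. -/
theorem free_indec {T : Type} [CommRing T] [Nontrivial T] (M : Type) [AddCommGroup M]
    [Module T M] [Module.Finite T M] [Module.Free T M] [Nontrivial M]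
    (h : ∀ e : M →ₗ[T] M, e ∘ₗ e = e → e = 0 ∨ e = LinearMap.id) :
    Nonempty (M ≃ₗ[T] T) := by
  classical
  let b := Module.Free.chooseBasis T M
  set ι := Module.Free.ChooseBasisIndex T M
  have hne : Nonempty ι := b.index_nonempty
  obtain ⟨i0⟩ := hne
  by_cases hsub : Subsingleton ι
  · haveI : Unique ι := ⟨⟨i0⟩, fun j => Subsingleton.elim j i0⟩
    exact ⟨b.repr.trans (Finsupp.LinearEquiv.finsuppUnique T T ι)⟩
  · exfalso
    rw [not_subsingleton_iff_nontrivial] at hsub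
    obtain ⟨i, j, hij⟩ := exists_pair_ne ι
    set e : M →ₗ[T] M := (LinearMap.toSpanSingleton T M (b i)) ∘ₗ (b.coord i) with he
    have hap : ∀ m, e m = (b.repr m i) • b i := fun m => rfl
    have hid : e ∘ₗ e = e := by
      apply LinearMap.ext
      intro m
      show e (e m) = e m
      rw [hap (e m), hap m, map_smul, Finsupp.smul_apply,
        b.repr_self_apply, if_pos rfl, smul_eq_mul, mul_one]
    rcases h e hid with h0 | h1
    · have := congrArg (fun g : M →ₗ[T] M => g (b i)) h0
      simp only [hap, LinearMap.zero_apply] at this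
      rw [b.repr_self_apply, if_pos rfl, one_smul] at this
      exact b.ne_zero i this
    · have := congrArg (fun g : M →ₗ[T] M => g (b j)) h1
      simp only [hap, LinearMap.id_apply] at this
      rw [b.repr_self_apply, if_neg (Ne.symm hij), zero_smul] at this
      exact b.ne_zero j this.symm



variable (k : Type) [Field k]

lemma noetherianRing_Rk : IsNoetherianRing (Rk k) := by
  classical
  letI : Algebra (PowerSeries k) (Rk k) :=
    RingHom.toAlgebra ((Ideal.Quotient.mk (Ik k)).comp (psi k))
  have halg : ∀ (p : PowerSeries k) (r : Rk k),
      p • r = Ideal.Quotient.mk (Ik k) (psi k p) * r := fun p r => rfl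
  have hspan : (⊤ : Submodule (PowerSeries k) (Rk k)) =
      Submodule.span (PowerSeries k) {1, xk k} := by
    apply le_antisymm ?_ le_top
    intro r _
    obtain ⟨f, rfl⟩ := Ideal.Quotient.mk_surjective r
    obtain ⟨p, q, hpq⟩ := exists_psi_decomp k f
    have h0 : Ideal.Quotient.mk (Ik k) f =
        Ideal.Quotient.mk (Ik k) (psi k p + psi k q * X 0) := by
      rw [← sub_eq_zero, ← map_sub]
      exact Ideal.Quotient.eq_zero_iff_mem.mpr hpq
    have key : Ideal.Quotient.mk (Ik k) f = p • (1 : Rk k) + q • xk k := by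
      rw [h0, map_add, map_mul, halg, halg, mul_one]
      rfl
    rw [key]
    exact Submodule.add_mem _ (Submodule.smul_mem _ _ (Submodule.subset_span (by simp)))
      (Submodule.smul_mem _ _ (Submodule.subset_span (by simp)))
  haveI : Module.Finite (PowerSeries k) (Rk k) := by
    refine ⟨⟨({1, xk k} : Finset (Rk k)), ?_⟩⟩
    rw [Finset.coe_insert, Finset.coe_singleton]
    exact hspan.symm
  haveI h1 : IsNoetherian (PowerSeries k) (Rk k) :=
    isNoetherian_of_isNoetherianRing_of_finite (PowerSeries k) (Rk k)
  exact isNoetherianRing_iff.mpr (isNoetherian_of_tower (PowerSeries k) h1)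



variable (k : Type) [Field k]

theorem classify (M : ModuleCat.{0} (Rk k)) (hfin : Module.Finite (Rk k) M)
    (hindec : Indec (Rk k) M)
    (htl : ∃ (n : ℕ) (f : ↑M →ₗ[Rk k] (Fin n → Rk k)), Function.Injective f)
    (hnfree : ¬ Module.Free (Rk k) M) :
    Nonempty (↑M ≃ₗ[Rk k] (Rk k ⧸ Ideal.span {xk k})) ∨
    Nonempty (↑M ≃ₗ[Rk k] (Rk k ⧸ Ideal.span {xk k, yk k})) := by
  classical
  obtain ⟨hnontriv, hidem⟩ := hindec
  obtain ⟨a, f, hf⟩ := htl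
  -- Step 1 : `x` kills `M`.
  have hx : ∀ m : ↑M, xk k • m = 0 := by
    rcases em (∃ (i : Fin a) (m : ↑M), IsUnit (f m i)) with ⟨i, m, hunit⟩ | hno
    · exfalso; apply hnfree
      obtain ⟨u, hu⟩ := hunit
      set c : ↑M →ₗ[Rk k] Rk k := (LinearMap.proj i).comp f with hc
      have hcm : c m = ↑u := hu.symm
      set m0 : ↑M := (↑u⁻¹ : Rk k) • m with hm0
      have hcm0 : c m0 = 1 := by
        rw [hm0, map_smul, smul_eq_mul, hcm]; exact Units.inv_mul u
      set s : Rk k →ₗ[Rk k] ↑M := LinearMap.toSpanSingleton (Rk k) ↑M m0 with hsdef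
      have hs : ∀ r : Rk k, s r = r • m0 := fun r => rfl
      have hcs : c ∘ₗ s = LinearMap.id := by
        apply LinearMap.ext; intro r
        show c (s r) = r
        rw [hs, map_smul, hcm0, smul_eq_mul, mul_one]
      have hsc : s ∘ₗ c = LinearMap.id := by
        have hm0ne : m0 ≠ 0 := by
          intro h0
          rw [h0, map_zero] at hcm0
          exact zero_ne_one hcm0
        have hidm : (s ∘ₗ c) ∘ₗ (s ∘ₗ c) = s ∘ₗ c := by
          apply LinearMap.ext; intro m'
          show s (c (s (c m'))) = s (c m')
          rw [hs (c m'), map_smul, hcm0, smul_eq_mul, mul_one]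
          exact hs (c m')
        rcases hidem (s ∘ₗ c) hidm with h0 | h1
        · exfalso
          apply hm0ne
          have h2 : s (c m0) = 0 := LinearMap.ext_iff.mp h0 m0
          rwa [hcm0, hs, one_smul] at h2
        · exact h1
      exact Module.Free.of_equiv (LinearEquiv.ofLinear s c hsc hcs)
    · intro m
      apply hf
      rw [map_smul, map_zero]
      funext i
      rw [Pi.smul_apply, Pi.zero_apply, smul_eq_mul]
      exact x_mul_of_mem k _ (nonunit_mem k _ (fun h => hno ⟨i, m, h⟩))
  -- Step 2 : `M` is a module over `S = R/(x)`.
  have htorset : Module.IsTorsionBySet (Rk k) ↑M ((Ideal.span {xk k} : Ideal (Rk k)) : Set (Rk k)) :=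
    (Module.isTorsionBySet_span_singleton_iff (xk k)).mpr hx
  letI : Module (Rk k ⧸ Ideal.span {xk k}) ↑M := htorset.module
  haveI := Module.IsTorsionBySet.isScalarTower htorset (S := Rk k)
  haveI : Module.Finite (Rk k ⧸ Ideal.span {xk k}) ↑M :=
    Module.Finite.of_restrictScalars_finite (Rk k) _ _
  haveI : IsDomain (Rk k ⧸ Ideal.span {xk k}) := sDomain k
  haveI : IsPrincipalIdealRing (Rk k ⧸ Ideal.span {xk k}) := sPIR k
  set S := Rk k ⧸ Ideal.span {xk k} with hSdef
  set T := Submodule.torsion S ↑M with hTdef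
  haveI : Module.IsTorsionFree S (↑M ⧸ T) :=
    Submodule.QuotientTorsion.instIsTorsionFree (R := S) (M := ↑M)
  haveI : Module.Free S (↑M ⧸ T) :=
    Module.free_of_finite_type_torsion_free' (R := S) (M := ↑M ⧸ T)
  obtain ⟨s, hs⟩ := Module.projective_lifting_property T.mkQ LinearMap.id T.mkQ_surjective
  have hs' : ∀ z, T.mkQ (s z) = z := fun z => LinearMap.ext_iff.mp hs z
  set e : ↑M →ₗ[S] ↑M := s ∘ₗ T.mkQ with hedef
  have he : ∀ m : ↑M, e m = s (T.mkQ m) := fun m => rfl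
  set eR : ↑M →ₗ[Rk k] ↑M := LinearMap.restrictScalars (Rk k) e with heR
  have heRidem : eR ∘ₗ eR = eR := by
    apply LinearMap.ext; intro m
    show e (e m) = e m
    rw [he m, he, hs']
  rcases hidem eR heRidem with h0 | h1
  · -- torsion case : `M` is a vector space over `R/(x,y)`
    right
    have hmkQ0 : ∀ m : ↑M, T.mkQ m = 0 := by
      intro m
      have h2 : e m = 0 := LinearMap.ext_iff.mp h0 m
      have h3 := hs' (T.mkQ m)
      rw [← he m, h2, map_zero] at h3
      exact h3.symm
    have hy : ∀ m : ↑M, yk k • m = 0 := by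
      intro m
      have hmT : m ∈ T := (Submodule.Quotient.mk_eq_zero T).mp (hmkQ0 m)
      obtain ⟨aa, haa⟩ := (Submodule.mem_torsion_iff (R := S) m).mp hmT
      obtain ⟨σ, hσ⟩ := Ideal.Quotient.mk_surjective (aa : S)
      have hσm : σ • m = 0 := by
        have h6 : (Ideal.Quotient.mk (Ideal.span {xk k}) σ : S) • m = σ • m :=
          Module.IsTorsionBySet.mk_smul htorset σ m
        rw [← h6, hσ]
        exact haa
      have hσnot : σ ∉ Ideal.span {xk k} := by
        intro hmem
        have h7 : (aa : S) = 0 := by rw [← hσ, Ideal.Quotient.eq_zero_iff_mem]; exact hmem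
        exact nonZeroDivisors.ne_zero aa.2 h7
      have hcoord : ∀ i, yk k * f m i = 0 := by
        intro i
        have h5 : σ • f m = 0 := by rw [← map_smul, hσm, map_zero]
        exact y_mul_eq_zero k (f m i) σ (congrFun h5 i) hσnot
      apply hf
      rw [map_smul, map_zero]
      funext i
      exact hcoord i
    -- now `span {x, y}` kills `M`
    have htor2 : Module.IsTorsionBySet (Rk k) ↑M
        ((Ideal.span {xk k, yk k} : Ideal (Rk k)) : Set (Rk k)) := by
      intro m r
      obtain ⟨c₁, c₂, hc⟩ := Ideal.mem_span_pair.mp r.2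
      have : (r : Rk k) • m = c₁ • (xk k • m) + c₂ • (yk k • m) := by
        rw [← mul_smul, ← mul_smul, ← add_smul, hc]
      rw [this, hx, hy, smul_zero, smul_zero, add_zero]
    letI : Module (Rk k ⧸ Ideal.span {xk k, yk k}) ↑M := htor2.module
    haveI := Module.IsTorsionBySet.isScalarTower htor2 (S := Rk k)
    haveI : (Ideal.span {xk k, yk k}).IsMaximal :=
      span_xy_eq_maximalIdeal k ▸ IsLocalRing.maximalIdeal.isMaximal (Rk k)
    letI : Field (Rk k ⧸ Ideal.span {xk k, yk k}) := Ideal.Quotient.field _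
    haveI : Module.Finite (Rk k ⧸ Ideal.span {xk k, yk k}) ↑M :=
      Module.Finite.of_restrictScalars_finite (Rk k) _ _
    haveI : Nontrivial ↑M := hnontriv
    obtain ⟨eq⟩ := free_indec (T := Rk k ⧸ Ideal.span {xk k, yk k}) ↑M (by
      intro e' he'
      set e'R : ↑M →ₗ[Rk k] ↑M := LinearMap.restrictScalars (Rk k) e' with he'R
      have : e'R ∘ₗ e'R = e'R := by
        apply LinearMap.ext; intro m
        show e' (e' m) = e' m
        exact LinearMap.ext_iff.mp he' m
      rcases hidem e'R this with hh | hh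
      · left; exact LinearMap.ext fun m => LinearMap.ext_iff.mp hh m
      · right; exact LinearMap.ext fun m => LinearMap.ext_iff.mp hh m)
    exact ⟨eq.restrictScalars (Rk k)⟩
  · -- torsion-free case : `M ≅ S`
    left
    have hinj : ∀ m : ↑M, T.mkQ m = 0 → m = 0 := by
      intro m hm
      have h2 : eR m = m := LinearMap.ext_iff.mp h1 m
      have h3 : e m = m := h2
      rw [he m, hm, map_zero] at h3
      exact h3.symm
    haveI : Module.IsTorsionFree S ↑M := by
      refine (Submodule.isTorsionFree_iff_torsion_eq_bot (R := S) (M := ↑M)).mpr ?_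
      rw [eq_bot_iff]
      intro m hm
      have := hinj m ((Submodule.Quotient.mk_eq_zero T).mpr hm)
      simpa using this
    haveI : Module.Free S ↑M := Module.free_of_finite_type_torsion_free' (R := S) (M := ↑M)
    haveI : Nontrivial ↑M := hnontriv
    obtain ⟨eq⟩ := free_indec (T := S) ↑M (by
      intro e' he'
      set e'R : ↑M →ₗ[Rk k] ↑M := LinearMap.restrictScalars (Rk k) e' with he'R
      have : e'R ∘ₗ e'R = e'R := by
        apply LinearMap.ext; intro m
        show e' (e' m) = e' m
        exact LinearMap.ext_iff.mp he' m
      rcases hidem e'R this with hh | hh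
      · left; exact LinearMap.ext fun m => LinearMap.ext_iff.mp hh m
      · right; exact LinearMap.ext fun m => LinearMap.ext_iff.mp hh m)
    exact ⟨eq.restrictScalars (Rk k)⟩


end Stmt17

open Stmt17 MvPowerSeries

/-- for `R = k[[x,y]]/(x², xy)`, every indecomposable non-free torsionless
(finitely generated) `R`-module is isomorphic to `R/(x)` or `R/(x,y)`; in particular the
category of first syzygies has finite representation type. -/
theorem stmt17 (k : Type) [Field k] :
    ∀ (I : Ideal (MvPowerSeries (Fin 2) k)),
      I = Ideal.span {(MvPowerSeries.X 0 : MvPowerSeries (Fin 2) k) ^ 2,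
        MvPowerSeries.X 0 * MvPowerSeries.X 1} →
    ∀ (x y : MvPowerSeries (Fin 2) k ⧸ I),
      x = Ideal.Quotient.mk I (MvPowerSeries.X 0) →
      y = Ideal.Quotient.mk I (MvPowerSeries.X 1) →
    (∀ M : ModuleCat.{0} (MvPowerSeries (Fin 2) k ⧸ I),
      Module.Finite (MvPowerSeries (Fin 2) k ⧸ I) M →
      Indec (MvPowerSeries (Fin 2) k ⧸ I) M →
      (∃ (n : ℕ) (f : M →ₗ[MvPowerSeries (Fin 2) k ⧸ I]
          (Fin n → MvPowerSeries (Fin 2) k ⧸ I)), Function.Injective f) →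
      ¬ Module.Free (MvPowerSeries (Fin 2) k ⧸ I) M →
      (Nonempty (M ≃ₗ[MvPowerSeries (Fin 2) k ⧸ I]
          ((MvPowerSeries (Fin 2) k ⧸ I) ⧸ Ideal.span {x})) ∨
       Nonempty (M ≃ₗ[MvPowerSeries (Fin 2) k ⧸ I]
          ((MvPowerSeries (Fin 2) k ⧸ I) ⧸ Ideal.span {x, y})))) ∧
    FiniteRepType (MvPowerSeries (Fin 2) k ⧸ I)
      (fun N => ∃ M : ModuleCat.{0} (MvPowerSeries (Fin 2) k ⧸ I),
        Module.Finite (MvPowerSeries (Fin 2) k ⧸ I) M ∧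
          SyzygyOf (MvPowerSeries (Fin 2) k ⧸ I) N M) := by
  intro I hI x y hxd hyd
  subst hI; subst hxd; subst hyd
  constructor
  · intro M hfin hindec hemb hnfree
    exact classify k M hfin hindec hemb hnfree
  · refine ⟨3, ![ModuleCat.of _ (Rk k),
      ModuleCat.of _ (Rk k ⧸ Ideal.span {xk k}),
      ModuleCat.of _ (Rk k ⧸ Ideal.span {xk k, yk k})], ?_⟩
    rintro N ⟨M, hMfin, P, hPfin, hPproj, ι, π, hιinj, hπsurj, hrange⟩ hindec
    haveI : IsNoetherianRing (Rk k) := noetherianRing_Rk k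
    haveI := hPfin
    haveI := hPproj
    haveI : IsNoetherian (Rk k) ↑P :=
      isNoetherian_of_isNoetherianRing_of_finite (Rk k) ↑P
    haveI hNfin : Module.Finite (Rk k) ↑N := Module.Finite.of_injective ι hιinj
    obtain ⟨n, g, hg⟩ := Module.Finite.exists_fin' (Rk k) ↑P
    obtain ⟨sec, hsec⟩ := Module.projective_lifting_property g LinearMap.id hg
    have hsecinj : Function.Injective sec := by
      intro u v huv
      have h1 : g (sec u) = g (sec v) := congrArg g huv
      have h2 := LinearMap.ext_iff.mp hsec u
      have h3 := LinearMap.ext_iff.mp hsec v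
      rw [LinearMap.comp_apply] at h2 h3
      rw [h2, h3] at h1
      exact h1
    have hemb : ∃ (m : ℕ) (f : ↑N →ₗ[Rk k] (Fin m → Rk k)), Function.Injective f :=
      ⟨n, sec ∘ₗ ι, by rw [LinearMap.coe_comp]; exact hsecinj.comp hιinj⟩
    by_cases hfree : Module.Free (Rk k) ↑N
    · refine ⟨0, ?_⟩
      haveI : Nontrivial ↑N := hindec.1
      obtain ⟨eq⟩ := free_indec (T := Rk k) ↑N hindec.2
      exact ⟨eq⟩
    · rcases classify k N hNfin hindec hemb hfree with h | h
      · obtain ⟨eq⟩ := h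
        exact ⟨1, ⟨eq⟩⟩
      · obtain ⟨eq⟩ := h
        exact ⟨2, ⟨eq⟩⟩
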